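/- Let λ be a labeling function, v a vertex of the extended game with I(v) = J_ℓ, and i a player. If c = sup{Cost_i(ρ) | ρ ∈ Λ(v)} is finite, then c ≤ |V| + 2·mR(λ_ℓ) + Σ_{r=|J_ℓ|+1}^{|Π|} ( |V| + 2·max{mR(λ_j) : J_j > J_ℓ, |J_j|=r} ). Moreover, in both cases (c finite or infinite) there exists a lasso-shaped λ-consistent play ρ = h g^ω from v with |hg| ≤ 2·|𝐂(λ)| and Cost_i(ρ) = c. -/

import Mathlib

open scoped Classical

namespace SPE

variable {V : Type*} {P : Type*}

/-- Vertices of the extended game: a base vertex together with the set of players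
having already visited their target set. -/
abbrev XV (V P : Type*) := V × Set P

/-- Edges of the extended game induced by base edges `E` and target sets `F`. -/
def XEdge (E : V → V → Prop) (F : P → Set V) (a b : XV V P) : Prop :=
  E a.1 b.1 ∧ b.2 = a.2 ∪ {i | b.1 ∈ F i}

/-- Plays of the extended game starting at `x`. -/
def IsPlay (E : V → V → Prop) (F : P → Set V) (x : XV V P) (ρ : ℕ → XV V P) : Prop :=
  ρ 0 = x ∧ ∀ k, XEdge E F (ρ k) (ρ (k + 1))

/-- Cost of player `i` along the suffix `ρ_{≥ n}`: the least `k` such that `i` belongs to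
the second component of `ρ (n + k)`, and `⊤` if there is no such `k`. -/
noncomputable def costFrom (ρ : ℕ → XV V P) (n : ℕ) (i : P) : ℕ∞ :=
  sInf ((fun k : ℕ => (k : ℕ∞)) '' {k | i ∈ (ρ (n + k)).2})

/-- Cost of player `i` along the play `ρ` of the extended game. -/
noncomputable def cost (ρ : ℕ → XV V P) (i : P) : ℕ∞ := costFrom ρ 0 i

/-- `λ`-consistency of a play. -/
def Consistent (own : V → P) (lam : XV V P → ℕ∞) (ρ : ℕ → XV V P) : Prop :=
  ∀ n, costFrom ρ n (own (ρ n).1) ≤ lam (ρ n)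

/-- The set `Λ(x)` of `λ`-consistent plays from `x`. -/
def Lam (E : V → V → Prop) (F : P → Set V) (own : V → P) (lam : XV V P → ℕ∞)
    (x : XV V P) : Set (ℕ → XV V P) :=
  {ρ | IsPlay E F x ρ ∧ Consistent own lam ρ}

/-- The initial labeling `λ⁰`. -/
noncomputable def lam0 (own : V → P) : XV V P → ℕ∞ :=
  fun v => if own v.1 ∈ v.2 then 0 else ⊤

/-- The labeling update operator. -/
noncomputable def update (E : V → V → Prop) (F : P → Set V) (own : V → P)
    (lam : XV V P → ℕ∞) (v : XV V P) : ℕ∞ :=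
  if own v.1 ∈ v.2 then 0
  else ⨅ w ∈ {w : XV V P | XEdge E F v w},
    (1 + sSup ((fun ρ => cost ρ (own v.1)) '' Lam E F own lam w))

/-- Vertices of the counter graph: an extended vertex with one counter per player. -/
abbrev CV (V P : Type*) := XV V P × (P → ℕ∞)

/-- Edges of the counter graph `𝐂(λ)`. -/
def CEdge (E : V → V → Prop) (F : P → Set V) (own : V → P) (lam : XV V P → ℕ∞)
    (a b : CV V P) : Prop :=
  XEdge E F a.1 b.1 ∧
  ∀ i : P,
    (i ∈ b.1.2 ∧ b.2 i = 0) ∨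
    (i ∉ b.1.2 ∧ own b.1.1 ≠ i ∧ 1 < a.2 i ∧ b.2 i = a.2 i - 1) ∨
    (i ∉ b.1.2 ∧ own b.1.1 = i ∧ 1 < a.2 i ∧ b.2 i = min (a.2 i - 1) (lam b.1))

/-- The starting vertex `v^C` of the counter graph associated with `v`. -/
noncomputable def startC (own : V → P) (lam : XV V P → ℕ∞) (v : XV V P) : CV V P :=
  (v, fun i => if i ∈ v.2 then 0 else if own v.1 = i then lam v else ⊤)

/-- The maximal finite range of `λ` restricted to a set `S` of extended vertices. -/
noncomputable def mR (lam : XV V P → ℕ∞) (S : Set (XV V P)) : ℕ :=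
  sSup {c : ℕ | ∃ w ∈ S, lam w = (c : ℕ∞)}


section Machinery

variable {V : Type*} {P : Type*}
variable {E : V → V → Prop} {F : P → Set V} {own : V → P} {lam : XV V P → ℕ∞}
variable {x : XV V P} {ρ : ℕ → XV V P}

lemma subset_mono (h : IsPlay E F x ρ) {m n : ℕ} (hmn : m ≤ n) : (ρ m).2 ⊆ (ρ n).2 := by
  induction n, hmn using Nat.le_induction with
  | base => exact subset_rfl
  | succ n hmn ih =>
    refine ih.trans ?_
    rw [(h.2 n).2]
    exact Set.subset_union_left

lemma reach_play (h : IsPlay E F x ρ) (m : ℕ) :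
    Relation.ReflTransGen (XEdge E F) x (ρ m) := by
  induction m with
  | zero => rw [h.1]
  | succ m ih => exact ih.tail (h.2 m)

lemma costFrom_le {n k : ℕ} {j : P} (h : j ∈ (ρ (n + k)).2) : costFrom ρ n j ≤ (k : ℕ∞) :=
  sInf_le ⟨k, h, rfl⟩

lemma lt_costFrom {n K : ℕ} {j : P} (h : ∀ k ≤ K, j ∉ (ρ (n + k)).2) :
    (K : ℕ∞) < costFrom ρ n j := by
  have h1 : ((K : ℕ∞) + 1) ≤ costFrom ρ n j := by
    refine le_sInf ?_
    rintro y ⟨k, hk, rfl⟩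
    have hKk : K < k := by
      by_contra hkK
      exact h k (le_of_not_gt hkK) hk
    show (K : ℕ∞) + 1 ≤ (k : ℕ∞)
    exact_mod_cast Nat.succ_le_of_lt hKk
  have h2 : (K : ℕ∞) < (K : ℕ∞) + 1 := by
    have : (K : ℕ∞) < ((K + 1 : ℕ) : ℕ∞) := by exact_mod_cast Nat.lt_succ_self K
    simpa using this
  exact h2.trans_le h1

lemma costFrom_eq {n : ℕ} {j : P} (h : {k : ℕ | j ∈ (ρ (n + k)).2}.Nonempty) :
    costFrom ρ n j = ((sInf {k : ℕ | j ∈ (ρ (n + k)).2} : ℕ) : ℕ∞) := by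
  apply le_antisymm
  · exact sInf_le ⟨_, Nat.sInf_mem h, rfl⟩
  · refine le_sInf ?_
    rintro y ⟨k, hk, rfl⟩
    show ((sInf {k : ℕ | j ∈ (ρ (n + k)).2} : ℕ) : ℕ∞) ≤ (k : ℕ∞)
    exact_mod_cast Nat.sInf_le hk

lemma costFrom_eq_top {n : ℕ} {j : P} (h : ∀ k, j ∉ (ρ (n + k)).2) : costFrom ρ n j = ⊤ := by
  unfold costFrom
  rw [show {k : ℕ | j ∈ (ρ (n + k)).2} = (∅ : Set ℕ) from
    Set.eq_empty_iff_forall_notMem.mpr h, Set.image_empty, sInf_empty]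

/-- The deadline counter of player `j` at time `n` along `ρ`. -/
noncomputable def dl (own : V → P) (lam : XV V P → ℕ∞) (ρ : ℕ → XV V P) (j : P) (n : ℕ) : ℕ∞ :=
  if j ∈ (ρ n).2 then 0
  else (Finset.range (n + 1)).inf fun m =>
    if own (ρ m).1 = j then lam (ρ m) - ((n - m : ℕ) : ℕ∞) else ⊤

lemma dl_mem {j : P} {n : ℕ} (hj : j ∈ (ρ n).2) : dl own lam ρ j n = 0 := if_pos hj

lemma dl_nmem {j : P} {n : ℕ} (hj : j ∉ (ρ n).2) :
    dl own lam ρ j n = (Finset.range (n + 1)).inf fun m =>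
      if own (ρ m).1 = j then lam (ρ m) - ((n - m : ℕ) : ℕ∞) else ⊤ := if_neg hj

lemma one_le_dl (hp : IsPlay E F x ρ) (hc : Consistent own lam ρ) {j : P} {n : ℕ}
    (hj : j ∉ (ρ n).2) : 1 ≤ dl own lam ρ j n := by
  rw [dl_nmem hj]
  refine Finset.le_inf fun m hm => ?_
  by_cases ho : own (ρ m).1 = j
  · rw [if_pos ho]
    have hm' : m ≤ n := by simpa [Nat.lt_succ_iff] using hm
    have hcost := hc m
    rw [ho] at hcost
    have hlt : ((n - m : ℕ) : ℕ∞) < lam (ρ m) := by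
      refine lt_of_lt_of_le ?_ hcost
      refine lt_costFrom fun k hk hmem => ?_
      exact hj (subset_mono hp (by omega) hmem)
    rw [ENat.one_le_iff_ne_zero]
    intro h0
    exact absurd (tsub_eq_zero_iff_le.mp h0) (not_le.mpr hlt)
  · rw [if_neg ho]; exact le_top

lemma dl_succ_le (hp : IsPlay E F x ρ) {j : P} {n : ℕ} (hj : j ∉ (ρ (n + 1)).2) :
    dl own lam ρ j (n + 1) ≤ dl own lam ρ j n - 1 := by
  have hjn : j ∉ (ρ n).2 := fun h => hj (subset_mono hp (Nat.le_succ n) h)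
  rw [dl_nmem hj, dl_nmem hjn]
  set f := fun m => if own (ρ m).1 = j then lam (ρ m) - ((n - m : ℕ) : ℕ∞) else ⊤ with hf
  by_cases htop : (Finset.range (n + 1)).inf f = ⊤
  · rw [htop]; simp
  · obtain ⟨m₀, hm₀, hmin⟩ :=
      Finset.exists_mem_eq_inf (Finset.range (n + 1)) ⟨0, by simp⟩ f
    rw [hmin] at htop ⊢
    have hm₀n : m₀ ≤ n := by simpa [Nat.lt_succ_iff] using hm₀
    have ho : own (ρ m₀).1 = j := by
      by_contra ho
      exact htop (by simp [hf, ho])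
    calc (Finset.range (n + 2)).inf
          (fun m => if own (ρ m).1 = j then lam (ρ m) - ((n + 1 - m : ℕ) : ℕ∞) else ⊤)
        ≤ (if own (ρ m₀).1 = j then lam (ρ m₀) - ((n + 1 - m₀ : ℕ) : ℕ∞) else ⊤) :=
          Finset.inf_le (by simp; omega)
      _ = lam (ρ m₀) - ((n + 1 - m₀ : ℕ) : ℕ∞) := by rw [if_pos ho]
      _ = f m₀ - 1 := by
          rw [hf]
          simp only [if_pos ho]
          rw [show (n + 1 - m₀ : ℕ) = (n - m₀) + 1 by omega]
          push_cast
          rw [tsub_add_eq_tsub_tsub]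

lemma dl_add_le (hp : IsPlay E F x ρ) {j : P} {n t : ℕ} (hj : j ∉ (ρ (n + t)).2) :
    dl own lam ρ j (n + t) ≤ dl own lam ρ j n - (t : ℕ∞) := by
  induction t with
  | zero => simp
  | succ t ih =>
    have hjt : j ∉ (ρ (n + t)).2 := fun h => hj (subset_mono hp (by omega) h)
    have hstep : dl own lam ρ j ((n + t) + 1) ≤ dl own lam ρ j (n + t) - 1 :=
      dl_succ_le hp hj
    calc dl own lam ρ j (n + (t + 1)) ≤ dl own lam ρ j (n + t) - 1 := hstep
      _ ≤ (dl own lam ρ j n - (t : ℕ∞)) - 1 := tsub_le_tsub_right (ih hjt) 1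
      _ = dl own lam ρ j n - ((t + 1 : ℕ) : ℕ∞) := by
          push_cast
          rw [tsub_add_eq_tsub_tsub]

lemma lt_dl (hp : IsPlay E F x ρ) (hc : Consistent own lam ρ) {j : P} {n t : ℕ}
    (hj : j ∉ (ρ (n + t)).2) : (t : ℕ∞) < dl own lam ρ j n := by
  have h1 : 1 ≤ dl own lam ρ j (n + t) := one_le_dl hp hc hj
  have h2 : dl own lam ρ j (n + t) ≤ dl own lam ρ j n - (t : ℕ∞) := dl_add_le hp hj
  have h3 : 0 < dl own lam ρ j n - (t : ℕ∞) := lt_of_lt_of_le zero_lt_one (h1.trans h2)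
  exact tsub_pos_iff_lt.mp h3

lemma entry_of_dl (hp : IsPlay E F x ρ) (hc : Consistent own lam ρ) {j : P} {n : ℕ}
    (hfin : dl own lam ρ j n ≠ ⊤) :
    ∃ e, e ≤ n + (dl own lam ρ j n).toNat ∧ j ∈ (ρ e).2 := by
  by_contra h
  push_neg at h
  have hj : j ∉ (ρ (n + (dl own lam ρ j n).toNat)).2 := h _ le_rfl
  have hlt := lt_dl hp hc hj
  have heq : ((dl own lam ρ j n).toNat : ℕ∞) = dl own lam ρ j n := ENat.coe_toNat hfin
  rw [heq] at hlt
  exact lt_irrefl _ hlt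

end Machinery

section Machinery2

variable {V : Type*} {P : Type*}
variable {E : V → V → Prop} {F : P → Set V} {own : V → P} {lam : XV V P → ℕ∞}
variable {x : XV V P} {ρ : ℕ → XV V P}

lemma dl_fresh (hp : IsPlay E F x ρ) {j : P} {n : ℕ} (hj : j ∉ (ρ n).2)
    (hfin : dl own lam ρ j n ≠ ⊤)
    (hprev : n = 0 ∨ dl own lam ρ j (n - 1) = ⊤) :
    dl own lam ρ j n = lam (ρ n) ∧ own (ρ n).1 = j := by
  set f := fun m => if own (ρ m).1 = j then lam (ρ m) - ((n - m : ℕ) : ℕ∞) else ⊤ with hf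
  rw [dl_nmem hj] at hfin
  obtain ⟨m₀, hm₀, hmin⟩ := Finset.exists_mem_eq_inf (Finset.range (n + 1)) ⟨0, by simp⟩ f
  rw [hmin] at hfin
  have hm₀n : m₀ ≤ n := by simpa [Nat.lt_succ_iff] using hm₀
  have ho : own (ρ m₀).1 = j := by
    by_contra ho
    exact hfin (by simp [hf, ho])
  have hlamfin : lam (ρ m₀) ≠ ⊤ := by
    intro h
    exact hfin (by simp [hf, ho, h])
  rcases eq_or_lt_of_le hm₀n with heq | hlt
  · subst heq
    constructor
    · rw [dl_nmem hj, hmin, hf]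
      simp [ho]
    · exact ho
  · exfalso
    have hn0 : n ≠ 0 := by omega
    rcases hprev with h0 | hprev
    · exact hn0 h0
    have hj' : j ∉ (ρ (n - 1)).2 := fun h => hj (subset_mono hp (by omega) h)
    have hle : dl own lam ρ j (n - 1) ≤
        (if own (ρ m₀).1 = j then lam (ρ m₀) - ((n - 1 - m₀ : ℕ) : ℕ∞) else ⊤) := by
      rw [dl_nmem hj']
      exact Finset.inf_le (by simp [Nat.lt_succ_iff]; omega)
    rw [if_pos ho, hprev] at hle
    have hne : lam (ρ m₀) - ((n - 1 - m₀ : ℕ) : ℕ∞) ≠ ⊤ :=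
      fun h => hlamfin (top_le_iff.mp (h ▸ tsub_le_self))
    exact hne (top_le_iff.mp hle)

lemma mR_set_finite [Finite V] [Finite P] (lam : XV V P → ℕ∞) (T : Set (XV V P)) :
    {c : ℕ | ∃ w ∈ T, lam w = (c : ℕ∞)}.Finite := by
  have h1 : {c : ℕ | ∃ w ∈ T, lam w = (c : ℕ∞)} ⊆ (fun c : ℕ => (c : ℕ∞)) ⁻¹' (lam '' T) := by
    rintro c ⟨w, hw, hc⟩
    exact ⟨w, hw, hc⟩
  exact (Set.Finite.preimage (Set.injOn_of_injective Nat.cast_injective)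
    ((Set.toFinite T).image lam)).subset h1

lemma lam_le_mR [Finite V] [Finite P] {lam : XV V P → ℕ∞} {T : Set (XV V P)} {w : XV V P}
    (hw : w ∈ T) (hfin : lam w ≠ ⊤) : lam w ≤ ((mR lam T : ℕ) : ℕ∞) := by
  have hmem : (lam w).toNat ∈ {c : ℕ | ∃ w ∈ T, lam w = (c : ℕ∞)} :=
    ⟨w, hw, (ENat.coe_toNat hfin).symm⟩
  have hle := le_csSup (mR_set_finite lam T).bddAbove hmem
  calc lam w = (((lam w).toNat : ℕ) : ℕ∞) := (ENat.coe_toNat hfin).symm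
    _ ≤ ((mR lam T : ℕ) : ℕ∞) := by exact_mod_cast hle

lemma dl_le_mR_univ [Finite V] [Finite P] {j : P} {n : ℕ}
    (hfin : dl own lam ρ j n ≠ ⊤) : dl own lam ρ j n ≤ ((mR lam Set.univ : ℕ) : ℕ∞) := by
  by_cases hj : j ∈ (ρ n).2
  · rw [dl_mem hj]; exact zero_le
  · set f := fun m => if own (ρ m).1 = j then lam (ρ m) - ((n - m : ℕ) : ℕ∞) else ⊤ with hf
    rw [dl_nmem hj] at hfin ⊢
    obtain ⟨m₀, hm₀, hmin⟩ := Finset.exists_mem_eq_inf (Finset.range (n + 1)) ⟨0, by simp⟩ f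
    rw [hmin] at hfin ⊢
    have ho : own (ρ m₀).1 = j := by
      by_contra ho
      exact hfin (by simp [hf, ho])
    have hlamfin : lam (ρ m₀) ≠ ⊤ := by
      intro h
      exact hfin (by simp [hf, ho, h])
    calc f m₀ ≤ lam (ρ m₀) := by rw [hf]; simp only [if_pos ho]; exact tsub_le_self
      _ ≤ ((mR lam Set.univ : ℕ) : ℕ∞) := lam_le_mR (Set.mem_univ _) hlamfin

end Machinery2

section Pump

variable {V : Type*} {P : Type*}
variable {E : V → V → Prop} {F : P → Set V} {own : V → P} {lam : XV V P → ℕ∞}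
variable {x : XV V P} {ρ : ℕ → XV V P}

lemma pump (hp : IsPlay E F x ρ) (hc : Consistent own lam ρ)
    {p q : ℕ} (hpq : p < q) (hst : ρ p = ρ q)
    (hdl : ∀ j, dl own lam ρ j p = dl own lam ρ j q) :
    ∃ ρ' : ℕ → XV V P, IsPlay E F x ρ' ∧ Consistent own lam ρ' ∧
      (∀ n, n ≤ p → ρ' n = ρ n) ∧ (∀ n, p ≤ n → (ρ' n).2 = (ρ p).2) ∧
      (∀ k, p ≤ k → ρ' (k + (q - p)) = ρ' k) := by
  set r := q - p with hr
  have hr0 : 0 < r := by omega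
  set φ : ℕ → ℕ := fun n => if n ≤ p then n else p + (n - p) % r with hφ
  have hφ1 : ∀ n, n ≤ p → φ n = n := fun n hn => if_pos hn
  have hφeq : ∀ n, p ≤ n → φ n = p + (n - p) % r := by
    intro n hn
    rcases eq_or_lt_of_le hn with h | h
    · rw [hφ]; simp [← h]
    · exact if_neg (by omega)
  have hφub : ∀ n, p ≤ φ n → φ n ≤ q := by
    intro n _
    rw [hφ]
    by_cases h : n ≤ p
    · simp [h]; omega
    · simp [h]
      have := Nat.mod_lt (n - p) hr0
      omega
  have hφlb : ∀ n, p ≤ n → p ≤ φ n ∧ φ n < q := by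
    intro n hn
    rw [hφeq n hn]
    have := Nat.mod_lt (n - p) hr0
    omega
  have hSq : (ρ q).2 = (ρ p).2 := by rw [hst]
  have hS : ∀ m, p ≤ m → m ≤ q → (ρ m).2 = (ρ p).2 := by
    intro m h1 h2
    refine Set.Subset.antisymm ?_ (subset_mono hp h1)
    rw [← hSq]
    exact subset_mono hp h2
  -- F2 : pending players at the loop never have finite constraints
  have hF2 : ∀ j, j ∉ (ρ p).2 → ∀ m, m ≤ q → own (ρ m).1 = j → lam (ρ m) = ⊤ := by
    intro j hj m hm ho
    have hjq : j ∉ (ρ q).2 := by rw [hSq]; exact hj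
    have htop : dl own lam ρ j q = ⊤ := by
      by_contra hfin
      have h1 : 1 ≤ dl own lam ρ j q := one_le_dl hp hc hjq
      have h2 : dl own lam ρ j (p + (q - p)) ≤ dl own lam ρ j p - ((q - p : ℕ) : ℕ∞) :=
        dl_add_le hp (by rw [show p + (q - p) = q by omega]; exact hjq)
      rw [show p + (q - p) = q by omega, hdl j] at h2
      lift dl own lam ρ j q to ℕ using hfin with D hD
      rw [← ENat.coe_sub] at h2
      have h2' : D ≤ D - (q - p) := by exact_mod_cast h2
      have h1' : 1 ≤ D := by exact_mod_cast h1
      omega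
    have hle : dl own lam ρ j q ≤
        (if own (ρ m).1 = j then lam (ρ m) - ((q - m : ℕ) : ℕ∞) else ⊤) := by
      rw [dl_nmem hjq]
      exact Finset.inf_le (by simp [Nat.lt_succ_iff]; omega)
    rw [if_pos ho, htop] at hle
    have := top_le_iff.mp hle
    rcases WithTop.sub_eq_top_iff.mp this with ⟨h, _⟩
    exact h
  refine ⟨fun n => ρ (φ n), ⟨?_, ?_⟩, ?_, ?_, ?_, ?_⟩
  · -- start
    show ρ (φ 0) = x
    rw [hφ1 0 (by omega)]
    exact hp.1
  · -- edges
    intro k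
    show XEdge E F (ρ (φ k)) (ρ (φ (k + 1)))
    rcases le_or_gt (k + 1) p with h | h
    · rw [hφ1 k (by omega), hφ1 (k + 1) h]
      exact hp.2 k
    · have hk : p ≤ k := by omega
      rw [hφeq k hk, hφeq (k + 1) (by omega)]
      set a := (k - p) % r with ha
      have halt : a < r := Nat.mod_lt _ hr0
      have h2 : k + 1 - p = (k - p) + 1 := by omega
      rcases eq_or_lt_of_le (Nat.succ_le_of_lt halt) with heq | hlt
      · -- wrap around
        have hmod : (k + 1 - p) % r = 0 := by
          rw [h2, Nat.add_mod, ← ha]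
          by_cases hr1 : r = 1
          · have ha0 : a = 0 := by omega
            rw [ha0, hr1]
          · rw [Nat.mod_eq_of_lt (show 1 < r by omega),
              show a + 1 = r from heq, Nat.mod_self]
        rw [hmod, Nat.add_zero]
        have hq : ρ p = ρ (p + a + 1) := by
          rw [hst]
          congr 1
          omega
        rw [hq]
        exact hp.2 (p + a)
      · have hmod : (k + 1 - p) % r = a + 1 := by
          rw [h2, Nat.add_mod, ← ha, Nat.mod_eq_of_lt (show 1 < r by omega),
            Nat.mod_eq_of_lt hlt]
        rw [hmod, ← Nat.add_assoc]
        exact hp.2 (p + a)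
  · -- consistency
    intro n
    show costFrom (fun m => ρ (φ m)) n (own (ρ (φ n)).1) ≤ lam (ρ (φ n))
    by_cases hjmem : own (ρ (φ n)).1 ∈ (ρ (φ n)).2
    · have h0 : costFrom (fun m => ρ (φ m)) n (own (ρ (φ n)).1) ≤ ((0 : ℕ) : ℕ∞) :=
        costFrom_le (show own (ρ (φ n)).1 ∈ ((fun m => ρ (φ m)) (n + 0)).2 by simpa using hjmem)
      refine h0.trans ?_
      simp
    · rcases lt_or_ge n p with hn | hn
      · have hφn : φ n = n := hφ1 n (by omega)
        rw [hφn] at hjmem ⊢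
        by_cases hjS : own (ρ n).1 ∈ (ρ p).2
        · -- the owner reaches its target before p, in both plays
          set j := own (ρ n).1 with hj
          have hA : (p - n) ∈ {k : ℕ | j ∈ (ρ (n + k)).2} := by
            show j ∈ (ρ (n + (p - n))).2
            rw [show n + (p - n) = p by omega]
            exact hjS
          have hAne : {k : ℕ | j ∈ (ρ (n + k)).2}.Nonempty := ⟨_, hA⟩
          set k₀ := sInf {k : ℕ | j ∈ (ρ (n + k)).2} with hk₀
          have hk₀A : j ∈ (ρ (n + k₀)).2 := Nat.sInf_mem hAne
          have hk₀p : n + k₀ ≤ p := by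
            have := Nat.sInf_le hA
            omega
          have hmem' : j ∈ ((fun m => ρ (φ m)) (n + k₀)).2 := by
            show j ∈ (ρ (φ (n + k₀))).2
            rw [hφ1 _ hk₀p]
            exact hk₀A
          have h1 : costFrom (fun m => ρ (φ m)) n j ≤ (k₀ : ℕ∞) := costFrom_le hmem'
          have h2 : ((k₀ : ℕ) : ℕ∞) = costFrom ρ n j := (costFrom_eq hAne).symm
          exact h1.trans (h2.trans_le (hc n))
        · rw [hF2 _ hjS n (by omega) rfl]
          exact le_top
      · have hφn := hφlb n hn
        have hsnd : (ρ (φ n)).2 = (ρ p).2 := hS (φ n) hφn.1 (by omega)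
        have hjS : own (ρ (φ n)).1 ∉ (ρ p).2 := by rw [← hsnd]; exact hjmem
        rw [hF2 _ hjS (φ n) (by omega) rfl]
        exact le_top
  · -- prefix
    intro n hn
    show ρ (φ n) = ρ n
    rw [hφ1 n hn]
  · -- constant second components after p
    intro n hn
    exact hS (φ n) (hφlb n hn).1 (by have := (hφlb n hn).2; omega)
  · -- periodicity
    intro k hk
    show ρ (φ (k + r)) = ρ (φ k)
    rw [hφeq k hk, hφeq (k + r) (by omega)]
    congr 2
    rw [show k + r - p = (k - p) + r by omega, Nat.add_mod_right]

end Pump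

section Pigeon

variable {V : Type*} {P : Type*}
variable {E : V → V → Prop} {F : P → Set V} {own : V → P} {lam : XV V P → ℕ∞}
variable {x : XV V P} {ρ : ℕ → XV V P}

lemma exists_rep [Fintype V] [Fintype P] (own : V → P) (lam : XV V P → ℕ∞) (ρ : ℕ → XV V P) :
    ∃ p q : ℕ, p < q ∧
      q ≤ Fintype.card V * 2 ^ Fintype.card P * (mR lam Set.univ + 2) ^ Fintype.card P ∧
      ρ p = ρ q ∧ ∀ j, dl own lam ρ j p = dl own lam ρ j q := by
  classical
  set R := mR lam Set.univ with hR
  set Bd := Fintype.card V * 2 ^ Fintype.card P * (R + 2) ^ Fintype.card P with hBd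
  let enc : ℕ∞ → Fin (R + 2) := fun y =>
    if y = ⊤ then ⟨R + 1, by omega⟩ else ⟨min y.toNat R, by omega⟩
  have henc : ∀ y z : ℕ∞, (y ≠ ⊤ → y ≤ ((R : ℕ) : ℕ∞)) → (z ≠ ⊤ → z ≤ ((R : ℕ) : ℕ∞)) →
      enc y = enc z → y = z := by
    intro y z hy hz he
    by_cases hyt : y = ⊤ <;> by_cases hzt : z = ⊤
    · rw [hyt, hzt]
    · exfalso
      have h1 : z.toNat ⊓ R ≤ R := min_le_right _ _
      simp only [enc, if_pos hyt, if_neg hzt] at he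
      have hv := congrArg Fin.val he
      simp only at hv
      omega
    · exfalso
      have h1 : y.toNat ⊓ R ≤ R := min_le_right _ _
      simp only [enc, if_pos hzt, if_neg hyt] at he
      have hv := congrArg Fin.val he
      simp only at hv
      omega
    · have h1 : y.toNat ≤ R := by
        have := ENat.toNat_le_toNat (hy hyt) (by simp)
        simpa using this
      have h2 : z.toNat ≤ R := by
        have := ENat.toNat_le_toNat (hz hzt) (by simp)
        simpa using this
      simp only [enc, if_neg hyt, if_neg hzt] at he
      have hv := congrArg Fin.val he
      simp only at hv
      have h3 : y.toNat = z.toNat := by omega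
      rw [← ENat.coe_toNat hyt, ← ENat.coe_toNat hzt, h3]
  let g : Fin (Bd + 1) → V × (P → Bool) × (P → Fin (R + 2)) := fun n =>
    ((ρ n).1, fun j => if j ∈ (ρ n).2 then true else false,
      fun j => enc (dl own lam ρ j n))
  have hcard : Fintype.card (V × (P → Bool) × (P → Fin (R + 2))) = Bd := by
    rw [Fintype.card_prod, Fintype.card_prod, Fintype.card_fun, Fintype.card_fun,
      Fintype.card_bool, Fintype.card_fin]
    ring
  obtain ⟨a, b, hab, hg⟩ := Fintype.exists_ne_map_eq_of_card_lt g
    (by rw [hcard, Fintype.card_fin]; omega)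
  have key : ∀ (a b : Fin (Bd + 1)), g a = g b → (a : ℕ) < (b : ℕ) →
      ∃ p q : ℕ, p < q ∧ q ≤ Bd ∧ ρ p = ρ q ∧ ∀ j, dl own lam ρ j p = dl own lam ρ j q := by
    intro a b hab hlt
    simp only [g, Prod.mk.injEq] at hab
    obtain ⟨h1, h2, h3⟩ := hab
    refine ⟨a, b, hlt, by omega, ?_, ?_⟩
    · have h2' : (ρ (a : ℕ)).2 = (ρ (b : ℕ)).2 := by
        ext j
        have := congrFun h2 j
        by_cases hja : j ∈ (ρ (a : ℕ)).2 <;> by_cases hjb : j ∈ (ρ (b : ℕ)).2 <;>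
          simp only [hja, hjb, if_true, if_false] at this ⊢ <;> tauto
      exact Prod.ext h1 h2'
    · intro j
      have he := congrFun h3 j
      exact henc _ _ (fun h => dl_le_mR_univ h) (fun h => dl_le_mR_univ h) he
  rcases Ne.lt_or_gt hab with h | h
  · exact key a b hg (by exact_mod_cast h)
  · exact key b a hg.symm (by exact_mod_cast h)

lemma csSup_mem_of_finite_val {s : Set ℕ∞} (hne : s.Nonempty) {c : ℕ}
    (h : sSup s = ((c : ℕ) : ℕ∞)) : ((c : ℕ) : ℕ∞) ∈ s := by
  have hfin : s.Finite := by
    refine ((Set.finite_Iic c).image (fun k : ℕ => (k : ℕ∞))).subset ?_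
    intro y hy
    have hyc : y ≤ ((c : ℕ) : ℕ∞) := h ▸ le_sSup hy
    have hyt : y ≠ ⊤ := by
      intro hyt
      rw [hyt] at hyc
      exact (ENat.coe_ne_top c) (top_le_iff.mp hyc)
    refine ⟨y.toNat, ?_, ENat.coe_toNat hyt⟩
    simp only [Set.mem_Iic]
    have := ENat.toNat_le_toNat hyc (by simp)
    simpa using this
  exact h ▸ hne.csSup_mem hfin

end Pigeon

section Count

variable {V : Type*} {P : Type*}

lemma count_bound [Fintype V] [Fintype P]
    {E : V → V → Prop} {F : P → Set V} {own : V → P} {lam : XV V P → ℕ∞}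
    (N : ℕ) (J : ℕ → Set P)
    (hmono : ∀ a b, 1 ≤ a → a ≤ N → 1 ≤ b → b ≤ N → J a ⊆ J b → a ≤ b)
    (ℓ : ℕ) (hℓ1 : 1 ≤ ℓ) (hℓN : ℓ ≤ N)
    (v : XV V P) (hv : v.2 = J ℓ)
    (hcover : ∀ w : XV V P, Relation.ReflTransGen (XEdge E F) v w →
      ∃ j, 1 ≤ j ∧ j ≤ N ∧ w.2 = J j)
    {ρ : ℕ → XV V P} (hp : IsPlay E F v ρ) (hc : Consistent own lam ρ)
    (c : ℕ)
    (hNR : ∀ p q : ℕ, p < q → q < c → ρ p = ρ q →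
      (∀ j, dl own lam ρ j p = dl own lam ρ j q) → False) :
    c ≤ Fintype.card V + 2 * mR lam {w | w.2 = J ℓ} +
      ∑ r ∈ Finset.Icc ((J ℓ).ncard + 1) (Fintype.card P),
        (Fintype.card V + 2 * sSup {c : ℕ | ∃ j, ℓ < j ∧ j ≤ N ∧
          (J j).ncard = r ∧ c = mR lam {w | w.2 = J j}}) := by
  classical
  set n0 := (J ℓ).ncard with hn0
  set KP := Fintype.card P with hKP'
  set KV := Fintype.card V with hKV'
  set Mf : ℕ → ℕ := fun r => if r = n0 then mR lam {w | w.2 = J ℓ} else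
    sSup {c : ℕ | ∃ j, ℓ < j ∧ j ≤ N ∧ (J j).ncard = r ∧ c = mR lam {w | w.2 = J j}} with hMf
  -- basic facts about the chain of second components
  have hS0 : (ρ 0).2 = J ℓ := by rw [hp.1, hv]
  have hchain : ∀ m n : ℕ, (ρ m).2 ⊆ (ρ n).2 ∨ (ρ n).2 ⊆ (ρ m).2 := by
    intro m n
    rcases le_total m n with h | h
    · exact Or.inl (subset_mono hp h)
    · exact Or.inr (subset_mono hp h)
  have heqS : ∀ m n : ℕ, ((ρ m).2).ncard = ((ρ n).2).ncard → (ρ m).2 = (ρ n).2 := by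
    intro m n hmn
    rcases hchain m n with h | h
    · exact Set.eq_of_subset_of_ncard_le h (le_of_eq hmn.symm) (Set.toFinite _)
    · exact (Set.eq_of_subset_of_ncard_le h (le_of_eq hmn) (Set.toFinite _)).symm
  have hn0le : ∀ n : ℕ, n0 ≤ ((ρ n).2).ncard := by
    intro n
    rw [hn0, ← hS0]
    exact Set.ncard_le_ncard (subset_mono hp (Nat.zero_le n)) (Set.toFinite _)
  have hKPle : ∀ n : ℕ, ((ρ n).2).ncard ≤ KP := by
    intro n
    have h := Set.ncard_le_ncard (Set.subset_univ ((ρ n).2)) (Set.toFinite _)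
    rw [Set.ncard_univ, Nat.card_eq_fintype_card] at h
    exact h
  have hn0KP : n0 ≤ KP := le_trans (hn0le 0) (hKPle 0)
  -- the mR of any occurring region is bounded by Mf of its size
  have hmRle : ∀ n : ℕ, mR lam {w | w.2 = (ρ n).2} ≤ Mf ((ρ n).2).ncard := by
    intro n
    obtain ⟨j, hj1, hjN, hJj⟩ := hcover (ρ n) (reach_play hp n)
    have hJsub : J ℓ ⊆ (ρ n).2 := by
      rw [← hS0]
      exact subset_mono hp (Nat.zero_le n)
    by_cases hr : ((ρ n).2).ncard = n0
    · have hSeq : (ρ n).2 = J ℓ :=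
        (Set.eq_of_subset_of_ncard_le hJsub (le_of_eq hr) (Set.toFinite _)).symm
      rw [hMf]
      simp only [if_pos hr]
      rw [hSeq]
    · have hℓj : ℓ < j := by
        have hle : ℓ ≤ j := hmono ℓ j hℓ1 hℓN hj1 hjN (by rw [← hJj]; exact hJsub)
        rcases eq_or_lt_of_le hle with h | h
        · exfalso
          apply hr
          rw [hJj, ← h, ← hn0]
        · exact h
      have hmem : mR lam {w | w.2 = (ρ n).2} ∈
          {c : ℕ | ∃ j', ℓ < j' ∧ j' ≤ N ∧ (J j').ncard = ((ρ n).2).ncard ∧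
            c = mR lam {w | w.2 = J j'}} := by
        refine ⟨j, hℓj, hjN, by rw [← hJj], by rw [← hJj]⟩
      have hbdd : BddAbove {c : ℕ | ∃ j', ℓ < j' ∧ j' ≤ N ∧ (J j').ncard = ((ρ n).2).ncard ∧
          c = mR lam {w | w.2 = J j'}} := by
        refine (Set.Finite.subset ((Set.finite_Iic N).image
          (fun j' => mR lam {w | w.2 = J j'})) ?_).bddAbove
        rintro y ⟨j', h1, h2, h3, rfl⟩
        exact ⟨j', h2, rfl⟩
      have := le_csSup hbdd hmem
      rw [hMf]
      simp only [if_neg hr]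
      exact this
  -- split range c into good and bad times
  set Bd : ℕ → Prop := fun n => ∃ j, j ∉ (ρ n).2 ∧ dl own lam ρ j n ≠ ⊤ with hBdDef
  set bad := (Finset.range c).filter Bd with hbad
  set good := (Finset.range c).filter (fun n => ¬ Bd n) with hgood
  have hsplit : bad.card + good.card = c := by
    rw [hbad, hgood, Finset.card_filter_add_card_filter_not, Finset.card_range]
  -- counting good times
  have hgood_card : good.card ≤ (Finset.Icc n0 KP).card * KV := by
    have hle := Finset.card_le_card_of_injOn (s := good)
      (f := fun n => ((((ρ n).2).ncard, (ρ n).1) : ℕ × V))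
      (t := (Finset.Icc n0 KP) ×ˢ (Finset.univ : Finset V)) ?_ ?_
    · rw [Finset.card_product, Finset.card_univ] at hle
      exact hle
    · intro n hn
      rw [Finset.mem_coe, Finset.mem_product]
      exact ⟨Finset.mem_Icc.mpr ⟨hn0le n, hKPle n⟩, Finset.mem_univ _⟩
    · intro n₁ hn₁ n₂ hn₂ hf
      rw [Finset.mem_coe, hgood, Finset.mem_filter, Finset.mem_range] at hn₁ hn₂
      have hf' : ((((ρ n₁).2).ncard, (ρ n₁).1) : ℕ × V) = (((ρ n₂).2).ncard, (ρ n₂).1) := hf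
      rw [Prod.mk.injEq] at hf'
      have hSeq : (ρ n₁).2 = (ρ n₂).2 := heqS n₁ n₂ hf'.1
      have hst : ρ n₁ = ρ n₂ := Prod.ext hf'.2 hSeq
      have hdleq : ∀ j, dl own lam ρ j n₁ = dl own lam ρ j n₂ := by
        intro j
        by_cases hj : j ∈ (ρ n₁).2
        · rw [dl_mem hj, dl_mem (hSeq ▸ hj)]
        · have h1 : dl own lam ρ j n₁ = ⊤ := by
            by_contra hfin
            exact hn₁.2 ⟨j, hj, hfin⟩
          have h2 : dl own lam ρ j n₂ = ⊤ := by
            by_contra hfin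
            exact hn₂.2 ⟨j, (hSeq ▸ hj), hfin⟩
          rw [h1, h2]
      by_contra hne
      rcases Ne.lt_or_gt hne with h | h
      · exact hNR n₁ n₂ h hn₂.1 hst hdleq
      · exact hNR n₂ n₁ h hn₁.1 hst.symm (fun j => (hdleq j).symm)
  -- counting bad times
  set sst : P → ℕ := fun j => sInf {s : ℕ | dl own lam ρ j s ≠ ⊤} with hsstdef
  set stt : ℕ → ℕ := fun n => sInf {s : ℕ | ∃ j, j ∉ (ρ n).2 ∧ dl own lam ρ j n ≠ ⊤ ∧
    sst j = s} with hsttdef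
  set u : ℕ → ℕ := fun n => sInf {m : ℕ | m < c ∧ Bd m ∧ (ρ (stt m)).2 = (ρ (stt n)).2}
    with hudef
  have master : ∀ n, Bd n → ∃ j, j ∉ (ρ n).2 ∧ dl own lam ρ j n ≠ ⊤ ∧ sst j = stt n := by
    intro n hBdn
    obtain ⟨j, hj1, hj2⟩ := hBdn
    exact Nat.sInf_mem (⟨sst j, j, hj1, hj2, rfl⟩ :
      {s : ℕ | ∃ j, j ∉ (ρ n).2 ∧ dl own lam ρ j n ≠ ⊤ ∧ sst j = s}.Nonempty)
  have hsst_facts : ∀ (j : P) (n : ℕ), j ∉ (ρ n).2 → dl own lam ρ j n ≠ ⊤ →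
      sst j ≤ n ∧ j ∉ (ρ (sst j)).2 ∧ dl own lam ρ j (sst j) ≠ ⊤ ∧
      (dl own lam ρ j (sst j)).toNat ≤ mR lam {w | w.2 = (ρ (sst j)).2} ∧
      n < sst j + (dl own lam ρ j (sst j)).toNat := by
    intro j n hjn hfin
    have hne' : {s : ℕ | dl own lam ρ j s ≠ ⊤}.Nonempty := ⟨n, hfin⟩
    have h1 : sst j ≤ n := Nat.sInf_le hfin
    have h2 : dl own lam ρ j (sst j) ≠ ⊤ := Nat.sInf_mem hne'
    have h3 : j ∉ (ρ (sst j)).2 := fun h => hjn (subset_mono hp h1 h)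
    have hprev : sst j = 0 ∨ dl own lam ρ j (sst j - 1) = ⊤ := by
      rcases Nat.eq_zero_or_pos (sst j) with h0 | h0
      · exact Or.inl h0
      · right
        by_contra h
        have h' := Nat.sInf_le (show (sst j - 1) ∈ {s : ℕ | dl own lam ρ j s ≠ ⊤} from h)
        have h'' : sst j ≤ sst j - 1 := h'
        omega
    obtain ⟨hdleq, hown⟩ := dl_fresh hp h3 h2 hprev
    have h4 : (dl own lam ρ j (sst j)).toNat ≤ mR lam {w | w.2 = (ρ (sst j)).2} := by
      have hle : dl own lam ρ j (sst j) ≤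
          ((mR lam {w | w.2 = (ρ (sst j)).2} : ℕ) : ℕ∞) := by
        rw [hdleq]
        exact lam_le_mR (show ρ (sst j) ∈ {w | w.2 = (ρ (sst j)).2} from rfl)
          (by rw [← hdleq]; exact h2)
      have := ENat.toNat_le_toNat hle (by simp)
      simpa using this
    have h5 : n < sst j + (dl own lam ρ j (sst j)).toNat := by
      have h6 : ((n - sst j : ℕ) : ℕ∞) < dl own lam ρ j (sst j) := by
        refine lt_dl hp hc (show j ∉ (ρ (sst j + (n - sst j))).2 from ?_)
        rw [show sst j + (n - sst j) = n by omega]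
        exact hjn
      rw [← ENat.coe_toNat h2] at h6
      have h7 : n - sst j < (dl own lam ρ j (sst j)).toNat := by exact_mod_cast h6
      omega
    exact ⟨h1, h3, h2, h4, h5⟩
  have hubound : ∀ n, n < c → Bd n →
      u n ≤ n ∧ n < u n + 2 * mR lam {w | w.2 = (ρ (stt n)).2} := by
    intro n hn hBdn
    have hmemn : n ∈ {m : ℕ | m < c ∧ Bd m ∧ (ρ (stt m)).2 = (ρ (stt n)).2} := ⟨hn, hBdn, rfl⟩
    have hule : u n ≤ n := Nat.sInf_le hmemn
    obtain ⟨huc, huBd, huκ⟩ := Nat.sInf_mem (⟨n, hmemn⟩ :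
      {m : ℕ | m < c ∧ Bd m ∧ (ρ (stt m)).2 = (ρ (stt n)).2}.Nonempty)
    obtain ⟨j', hj'n, hj'fin, hj'sst⟩ := master n hBdn
    obtain ⟨j₀, hj₀u, hj₀fin, hj₀sst⟩ := master (u n) huBd
    obtain ⟨ha1, ha2, ha3, ha4, ha5⟩ := hsst_facts j' n hj'n hj'fin
    obtain ⟨hb1, hb2, hb3, hb4, hb5⟩ := hsst_facts j₀ (u n) hj₀u hj₀fin
    rw [hj'sst] at ha1 ha2 ha3 ha4 ha5
    rw [hj₀sst] at hb1 hb2 hb3 hb4 hb5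
    -- entry of j₀
    obtain ⟨e, he_le, he_mem⟩ := entry_of_dl hp hc hb3
    -- j₀ is not in the region κ
    have hj₀κ : j₀ ∉ (ρ (stt n)).2 := by rw [← huκ]; exact hb2
    have hs'e : stt n < e := by
      by_contra h
      exact hj₀κ (subset_mono hp (le_of_not_gt h) he_mem)
    -- same region, same mR
    have hmReq : mR lam {w | w.2 = (ρ (stt (u n))).2} = mR lam {w | w.2 = (ρ (stt n)).2} := by
      rw [huκ]
    rw [hmReq] at hb4
    refine ⟨hule, ?_⟩
    omega
  have hbad_card : bad.card ≤ ∑ r ∈ Finset.Icc n0 KP, 2 * Mf r := by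
    have hle := Finset.card_le_card_of_injOn (s := bad)
      (f := fun n => (⟨((ρ (stt n)).2).ncard, n - u n⟩ : Σ _ : ℕ, ℕ))
      (t := (Finset.Icc n0 KP).sigma (fun r => Finset.range (2 * Mf r))) ?_ ?_
    · rw [Finset.card_sigma] at hle
      simpa using hle
    · intro n hn
      rw [hbad, Finset.mem_coe, Finset.mem_filter, Finset.mem_range] at hn
      simp only [Finset.mem_coe, Finset.mem_sigma, Finset.mem_range, Finset.mem_Icc]
      refine ⟨⟨hn0le _, hKPle _⟩, ?_⟩
      obtain ⟨hule, hlt⟩ := hubound n hn.1 hn.2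
      have := hmRle (stt n)
      omega
    · intro n₁ hn₁ n₂ hn₂ hf
      rw [Finset.mem_coe, hbad, Finset.mem_filter, Finset.mem_range] at hn₁ hn₂
      have hf' : (⟨((ρ (stt n₁)).2).ncard, n₁ - u n₁⟩ : Σ _ : ℕ, ℕ)
          = ⟨((ρ (stt n₂)).2).ncard, n₂ - u n₂⟩ := hf
      have hfst : ((ρ (stt n₁)).2).ncard = ((ρ (stt n₂)).2).ncard :=
        congrArg Sigma.fst hf'
      have hκeq : (ρ (stt n₁)).2 = (ρ (stt n₂)).2 := heqS _ _ hfst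
      have hueq : u n₁ = u n₂ := by
        rw [hudef]
        simp only
        rw [hκeq]
      have hsnd : n₁ - u n₁ = n₂ - u n₂ := by
        have := congrArg (fun z : (Σ _ : ℕ, ℕ) => z.2) hf'
        simpa using this
      have h1 := (hubound n₁ hn₁.1 hn₁.2).1
      have h2 := (hubound n₂ hn₂.1 hn₂.2).1
      omega
  -- assembling
  have hIcc : Finset.Icc n0 KP = insert n0 (Finset.Icc (n0 + 1) KP) := by
    ext y
    simp only [Finset.mem_Icc, Finset.mem_insert]
    omega
  have hn0mem : n0 ∉ Finset.Icc (n0 + 1) KP := by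
    simp only [Finset.mem_Icc]
    omega
  have hsum1 : ∑ r ∈ Finset.Icc n0 KP, 2 * Mf r
      = 2 * Mf n0 + ∑ r ∈ Finset.Icc (n0 + 1) KP, 2 * Mf r := by
    rw [hIcc, Finset.sum_insert hn0mem]
  have hcard1 : (Finset.Icc n0 KP).card = 1 + (Finset.Icc (n0 + 1) KP).card := by
    rw [Nat.card_Icc, Nat.card_Icc]
    omega
  have hMf0 : Mf n0 = mR lam {w | w.2 = J ℓ} := by rw [hMf]; simp
  have hsum2 : ∑ r ∈ Finset.Icc (n0 + 1) KP, (KV + 2 * Mf r)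
      = (Finset.Icc (n0 + 1) KP).card * KV + ∑ r ∈ Finset.Icc (n0 + 1) KP, 2 * Mf r := by
    rw [Finset.sum_add_distrib, Finset.sum_const, smul_eq_mul]
  have hgoal : ∀ r ∈ Finset.Icc (n0 + 1) KP, (KV + 2 * Mf r) =
      (Fintype.card V + 2 * sSup {c : ℕ | ∃ j, ℓ < j ∧ j ≤ N ∧
        (J j).ncard = r ∧ c = mR lam {w | w.2 = J j}}) := by
    intro r hr
    rw [Finset.mem_Icc] at hr
    rw [hMf]
    simp only [if_neg (show r ≠ n0 by omega)]
    rfl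
  rw [show (Fintype.card V + 2 * mR lam {w | w.2 = J ℓ} +
      ∑ r ∈ Finset.Icc ((J ℓ).ncard + 1) (Fintype.card P),
        (Fintype.card V + 2 * sSup {c : ℕ | ∃ j, ℓ < j ∧ j ≤ N ∧
          (J j).ncard = r ∧ c = mR lam {w | w.2 = J j}}))
      = KV + 2 * Mf n0 + ∑ r ∈ Finset.Icc (n0 + 1) KP, (KV + 2 * Mf r) by
    rw [Finset.sum_congr rfl hgoal, hMf0, hKV']]
  rw [hsum2]
  have hgc2 : good.card ≤ KV + (Finset.Icc (n0 + 1) KP).card * KV := by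
    calc good.card ≤ (Finset.Icc n0 KP).card * KV := hgood_card
      _ = (1 + (Finset.Icc (n0 + 1) KP).card) * KV := by rw [hcard1]
      _ = KV + (Finset.Icc (n0 + 1) KP).card * KV := by ring
  rw [hsum1] at hbad_card
  omega

end Count

/-- if the supremum of the costs of player `i` over `Λ(v)` is a finite
value `c`, then `c` is bounded as in Lemma 4.8; moreover (in both the finite and the
infinite case) the supremum is realized by a lasso-shaped `λ`-consistent play
`h·g^ω` with `|hg| ≤ 2·|𝐂(λ)|`. -/
theorem stmt14 {V P : Type*} [Fintype V] [Fintype P]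
    (E : V → V → Prop) (F : P → Set V) (own : V → P) (lam : XV V P → ℕ∞)
    (htot : ∀ u : V, ∃ w, E u w)
    (N : ℕ) (J : ℕ → Set P)
    (hmono : ∀ a b, 1 ≤ a → a ≤ N → 1 ≤ b → b ≤ N → J a ⊆ J b → a ≤ b)
    (ℓ : ℕ) (hℓ1 : 1 ≤ ℓ) (hℓN : ℓ ≤ N)
    (v : XV V P) (hv : v.2 = J ℓ)
    (hcover : ∀ w : XV V P, Relation.ReflTransGen (XEdge E F) v w →
      ∃ j, 1 ≤ j ∧ j ≤ N ∧ w.2 = J j)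
    (i : P) (hne : (Lam E F own lam v).Nonempty) :
    (∀ c : ℕ, sSup ((fun ρ => cost ρ i) '' Lam E F own lam v) = (c : ℕ∞) →
      c ≤ Fintype.card V + 2 * mR lam {w | w.2 = J ℓ} +
      ∑ r ∈ Finset.Icc ((J ℓ).ncard + 1) (Fintype.card P),
        (Fintype.card V + 2 * sSup {c : ℕ | ∃ j, ℓ < j ∧ j ≤ N ∧
          (J j).ncard = r ∧ c = mR lam {w | w.2 = J j}})) ∧
    (∃ ρ ∈ Lam E F own lam v,
      cost ρ i = sSup ((fun ρ' => cost ρ' i) '' Lam E F own lam v) ∧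
      ∃ p q : ℕ, 0 < q ∧
        p + q ≤ 2 * (Fintype.card V * 2 ^ Fintype.card P *
          (mR lam Set.univ + 2) ^ Fintype.card P) ∧
        ∀ k, p ≤ k → ρ (k + q) = ρ k) := by
  classical
  set Cs := ((fun ρ => cost ρ i) '' Lam E F own lam v) with hCs
  set Bd := Fintype.card V * 2 ^ Fintype.card P *
    (mR lam Set.univ + 2) ^ Fintype.card P with hBdd
  constructor
  · -- Part 1 : the bound on a finite supremum
    intro c hc
    have hmem : ((c : ℕ) : ℕ∞) ∈ Cs := csSup_mem_of_finite_val (hne.image _) hc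
    obtain ⟨ra, hρmem, hρcost⟩ := hmem
    obtain ⟨hplay, hcons⟩ := hρmem
    -- the entry time of `i` in `ra` is exactly `c`
    have hAne : {k : ℕ | i ∈ (ra (0 + k)).2}.Nonempty := by
      by_contra h
      rw [Set.not_nonempty_iff_eq_empty, Set.eq_empty_iff_forall_notMem] at h
      have := costFrom_eq_top (n := 0) (j := i) h
      have hctop : ((c : ℕ) : ℕ∞) = ⊤ := by rw [← hρcost]; exact this
      exact (ENat.coe_ne_top c) hctop
    have heq : cost ra i = ((sInf {k : ℕ | i ∈ (ra (0 + k)).2} : ℕ) : ℕ∞) :=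
      costFrom_eq hAne
    have hcc : sInf {k : ℕ | i ∈ (ra (0 + k)).2} = c := by
      have := heq.symm.trans hρcost
      exact_mod_cast this
    have hpend : ∀ k, k < c → i ∉ (ra k).2 := by
      intro k hk hmem'
      have : k ∈ {k : ℕ | i ∈ (ra (0 + k)).2} := by simpa using hmem'
      have := Nat.sInf_le this
      omega
    have hNR : ∀ p q : ℕ, p < q → q < c → ra p = ra q →
        (∀ j, dl own lam ra j p = dl own lam ra j q) → False := by
      intro p q hpq hqc hst hdl
      obtain ⟨ρ', hplay', hcons', hpre, hsnd, hper⟩ := pump hplay hcons hpq hst hdl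
      have hiS : i ∉ (ra p).2 := hpend p (by omega)
      have htopcost : cost ρ' i = ⊤ := by
        refine costFrom_eq_top (n := 0) (j := i) ?_
        intro k
        simp only [Nat.zero_add]
        rcases le_or_gt k p with hk | hk
        · rw [hpre k hk]
          exact hpend k (by omega)
        · intro hmem'
          rw [hsnd k (by omega)] at hmem'
          exact hiS hmem'
      have hCt : (⊤ : ℕ∞) ∈ Cs := ⟨ρ', ⟨hplay', hcons'⟩, htopcost⟩
      have h1 : (⊤ : ℕ∞) ≤ ((c : ℕ) : ℕ∞) := hc ▸ le_sSup hCt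
      exact (ENat.coe_ne_top c) (top_le_iff.mp h1)
    exact count_bound N J hmono ℓ hℓ1 hℓN v hv hcover hplay hcons c hNR
  · -- Part 2 : a lasso-shaped play realizing the supremum
    rcases eq_or_ne (sSup Cs) ⊤ with htop | hfin
    · -- infinite supremum
      have hlt : ((Bd : ℕ) : ℕ∞) < sSup Cs := by
        rw [htop]
        exact ENat.coe_lt_top Bd
      obtain ⟨y, hy, hBy⟩ := lt_sSup_iff.mp hlt
      obtain ⟨ra, hρmem, rfl⟩ := hy
      obtain ⟨hplay, hcons⟩ := hρmem
      have hpend : ∀ k, k ≤ Bd → i ∉ (ra k).2 := by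
        intro k hk hmem'
        have h1 : cost ra i ≤ (k : ℕ∞) :=
          costFrom_le (show i ∈ (ra (0 + k)).2 by simpa using hmem')
        have h2 : cost ra i ≤ ((Bd : ℕ) : ℕ∞) := h1.trans (by exact_mod_cast hk)
        exact absurd (lt_of_lt_of_le hBy h2) (lt_irrefl _)
      obtain ⟨p, q, hpq, hqB, hst, hdl⟩ := exists_rep own lam ra
      obtain ⟨ρ', hplay', hcons', hpre, hsnd, hper⟩ := pump hplay hcons hpq hst hdl
      have hiS : i ∉ (ra p).2 := hpend p (by omega)
      have htopcost : cost ρ' i = ⊤ := by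
        refine costFrom_eq_top (n := 0) (j := i) ?_
        intro k
        simp only [Nat.zero_add]
        rcases le_or_gt k p with hk | hk
        · rw [hpre k hk]
          exact hpend k (by omega)
        · intro hmem'
          rw [hsnd k (by omega)] at hmem'
          exact hiS hmem'
      refine ⟨ρ', ⟨hplay', hcons'⟩, by rw [htopcost, htop], p, q - p, by omega,
        by omega, ?_⟩
      intro k hk
      exact hper k hk
    · -- finite supremum
      obtain ⟨c, hc⟩ : ∃ c : ℕ, sSup Cs = ((c : ℕ) : ℕ∞) :=
        ⟨(sSup Cs).toNat, (ENat.coe_toNat hfin).symm⟩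
      have hmem := csSup_mem_of_finite_val (hne.image _) hc
      obtain ⟨ra, hρmem, hρcost⟩ := hmem
      obtain ⟨hplay, hcons⟩ := hρmem
      obtain ⟨p, q, hpq, hqB, hst, hdl⟩ := exists_rep own lam ra
      obtain ⟨ρ', hplay', hcons', hpre, hsnd, hper⟩ := pump hplay hcons hpq hst hdl
      have hSeq : (ra p).2 = (ra q).2 := congrArg Prod.snd hst
      by_cases hiq : i ∈ (ra q).2
      · have hip : i ∈ (ra p).2 := by rw [hSeq]; exact hiq
        have hset1 : {k : ℕ | i ∈ (ra (0 + k)).2} = {k : ℕ | i ∈ (ra k).2} := by simp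
        have hset2 : {k : ℕ | i ∈ (ρ' (0 + k)).2} = {k : ℕ | i ∈ (ρ' k).2} := by simp
        have hip' : i ∈ (ρ' p).2 := by rw [hpre p le_rfl]; exact hip
        have hAne : {k : ℕ | i ∈ (ra k).2}.Nonempty := ⟨p, hip⟩
        have hA'ne : {k : ℕ | i ∈ (ρ' k).2}.Nonempty := ⟨p, hip'⟩
        have hk₀p : sInf {k : ℕ | i ∈ (ra k).2} ≤ p := Nat.sInf_le hip
        have hk₁p : sInf {k : ℕ | i ∈ (ρ' k).2} ≤ p := Nat.sInf_le hip'
        have hk₀mem : i ∈ (ra (sInf {k : ℕ | i ∈ (ra k).2})).2 := Nat.sInf_mem hAne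
        have hk₁mem : i ∈ (ρ' (sInf {k : ℕ | i ∈ (ρ' k).2})).2 := Nat.sInf_mem hA'ne
        have e1 : sInf {k : ℕ | i ∈ (ρ' k).2} ≤ sInf {k : ℕ | i ∈ (ra k).2} := by
          refine Nat.sInf_le ?_
          show i ∈ (ρ' (sInf {k : ℕ | i ∈ (ra k).2})).2
          rw [hpre _ hk₀p]
          exact hk₀mem
        have e2 : sInf {k : ℕ | i ∈ (ra k).2} ≤ sInf {k : ℕ | i ∈ (ρ' k).2} := by
          refine Nat.sInf_le ?_
          show i ∈ (ra (sInf {k : ℕ | i ∈ (ρ' k).2})).2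
          rw [← hpre _ hk₁p]
          exact hk₁mem
        have hcost' : cost ρ' i = cost ra i := by
          have c1 : cost ρ' i = ((sInf {k : ℕ | i ∈ (ρ' (0 + k)).2} : ℕ) : ℕ∞) :=
            costFrom_eq (by rw [hset2]; exact hA'ne)
          have c2 : cost ra i = ((sInf {k : ℕ | i ∈ (ra (0 + k)).2} : ℕ) : ℕ∞) :=
            costFrom_eq (by rw [hset1]; exact hAne)
          rw [c1, c2, hset1, hset2]
          congr 1
          omega
        have hρcost2 : cost ra i = ((c : ℕ) : ℕ∞) := hρcost
        refine ⟨ρ', ⟨hplay', hcons'⟩, by rw [hcost', hρcost2, hc], p, q - p, by omega,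
          by omega, ?_⟩
        intro k hk
        exact hper k hk
      · exfalso
        have hipn : i ∉ (ra p).2 := by rw [hSeq]; exact hiq
        have htopcost : cost ρ' i = ⊤ := by
          refine costFrom_eq_top (n := 0) (j := i) ?_
          intro k
          simp only [Nat.zero_add]
          rcases le_or_gt k p with hk | hk
          · rw [hpre k hk]
            intro hmem'
            exact hipn (subset_mono hplay hk hmem')
          · intro hmem'
            rw [hsnd k (by omega)] at hmem'
            exact hipn hmem'
        have hCt : (⊤ : ℕ∞) ∈ Cs := ⟨ρ', ⟨hplay', hcons'⟩, htopcost⟩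
        have h1 : (⊤ : ℕ∞) ≤ ((c : ℕ) : ℕ∞) := hc ▸ le_sSup hCt
        exact (ENat.coe_ne_top c) (top_le_iff.mp h1)

end SPE
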